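/- If a, b ≥ 0 and k ≤ d, then ∑_{i=0}^{d-k} C(d,i) a^{d-i} b^i ≤ C(d,k) a^k (a+b)^{d-k}. -/

import Mathlib

lemma choose_key (d k i : ℕ) (h : k + i ≤ d) :
    d.choose i ≤ d.choose k * (d - k).choose i := by
  have h1 := Nat.choose_mul (n := d) (k := k + i) (s := i) (Nat.le_add_left _ _)
  have h2 := Nat.choose_mul (n := d) (k := k + i) (s := k) (Nat.le_add_right _ _)
  have hsymm : (k + i).choose i = (k + i).choose k := by
    rw [← Nat.choose_symm (Nat.le_add_right _ _), Nat.add_sub_cancel_left]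
  simp only [Nat.add_sub_cancel, Nat.add_sub_cancel_left] at h1 h2
  rw [hsymm, h2] at h1
  calc d.choose i ≤ d.choose i * (d - i).choose k := by
        exact Nat.le_mul_of_pos_right _ (Nat.choose_pos (by omega))
    _ = d.choose k * (d - k).choose i := h1.symm

theorem binom_sum_bound (d k : ℕ) (hk : k ≤ d) (a b : ℝ) (ha : 0 ≤ a) (hb : 0 ≤ b) :
    ∑ i ∈ Finset.range (d - k + 1), (d.choose i : ℝ) * a ^ (d - i) * b ^ i ≤
      (d.choose k : ℝ) * a ^ k * (a + b) ^ (d - k) := by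
  rw [add_comm a b, add_pow]
  rw [Finset.mul_sum]
  apply Finset.sum_le_sum
  intro i hi
  rw [Finset.mem_range] at hi
  have hik : i ≤ d - k := by omega
  have hpow : a ^ k * a ^ (d - k - i) = a ^ (d - i) := by
    rw [← pow_add]; congr 1; omega
  have hkey : (d.choose i : ℝ) ≤ (d.choose k : ℝ) * ((d - k).choose i : ℝ) := by
    rw [← Nat.cast_mul]
    exact_mod_cast choose_key d k i (by omega)
  calc (d.choose i : ℝ) * a ^ (d - i) * b ^ i
      ≤ (d.choose k : ℝ) * ((d - k).choose i : ℝ) * a ^ (d - i) * b ^ i := by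
        apply mul_le_mul_of_nonneg_right (mul_le_mul_of_nonneg_right hkey (by positivity)) (by positivity)
    _ = (d.choose k : ℝ) * a ^ k * (b ^ i * a ^ (d - k - i) * ((d - k).choose i : ℝ)) := by
        rw [← hpow]; ring
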